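/- Let F be the forest induced by a most parsimonious extension of a character χ to an X-tree T, with homoplasy score h = ℓ(T,χ) − |χ| + 1. Then the number of unique components of F lies between |χ| − h and |χ|, and the number of repeating components of F lies between h and 2h. -/

import Mathlib

open SimpleGraph

namespace PhyloMP

/-- The set of mutation edges of a vertex coloring `ω` of a graph:
edges whose two endpoints receive different states. -/
def mutationEdges {V C : Type} (g : SimpleGraph V) (ω : V → C) : Set (Sym2 V) :=
  {e | e ∈ g.edgeSet ∧ ∃ u v : V, e = s(u, v) ∧ ω u ≠ ω v}

/-- An unrooted binary phylogenetic tree on taxon set `X`, with vertex set `V`: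
a tree whose degree-1 vertices (leaves) are bijectively labeled by `X` and whose
other vertices have degree 3. -/
structure XTree (X V : Type) [Fintype V] where
  g : SimpleGraph V
  isTree : g.IsTree
  leaf : X → V
  leafInj : Function.Injective leaf
  leafDeg : ∀ x, (g.neighborSet (leaf x)).ncard = 1
  leavesOnly : ∀ v, (g.neighborSet v).ncard = 1 → ∃ x, leaf x = v
  internalDeg : ∀ v, (g.neighborSet v).ncard ≠ 1 → (g.neighborSet v).ncard = 3

variable {X V C : Type} [Fintype V]

/-- `ω` extends the character `χ` to all vertices of `T`. -/
def IsExtension (T : XTree X V) (χ : X → C) (ω : V → C) : Prop :=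
  ∀ x, ω (T.leaf x) = χ x

/-- The parsimony score `ℓ(T,χ)`: the minimum number of mutation edges over
all extensions of `χ` to `T`. -/
noncomputable def score (T : XTree X V) (χ : X → C) : ℕ :=
  sInf {n | ∃ ω : V → C, IsExtension T χ ω ∧ (mutationEdges T.g ω).ncard = n}

/-- A most parsimonious extension. -/
def IsMPExtension (T : XTree X V) (χ : X → C) (ω : V → C) : Prop :=
  IsExtension T χ ω ∧ (mutationEdges T.g ω).ncard = score T χ

/-- `|χ|`: the number of states used by the character `χ`. -/
noncomputable def nStates {X C : Type} (χ : X → C) : ℕ := (Set.range χ).ncard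

/-- `χ` is convex on `T`: its parsimony score equals its number of states minus one. -/
def IsConvex (T : XTree X V) (χ : X → C) : Prop := score T χ = nStates χ - 1

/-- The maximum parsimony distance between two `X`-trees. -/
noncomputable def dMP {V₁ V₂ : Type} [Fintype V₁] [Fintype V₂]
    (T₁ : XTree X V₁) (T₂ : XTree X V₂) : ℕ :=
  sSup {d | ∃ χ : X → ℕ, Nat.dist (score T₁ χ) (score T₂ χ) = d}

/-- A character achieving the maximum parsimony distance. -/
def IsOptimal {V₁ V₂ : Type} [Fintype V₁] [Fintype V₂]
    (T₁ : XTree X V₁) (T₂ : XTree X V₂) (χ : X → C) : Prop :=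
  Nat.dist (score T₁ χ) (score T₂ χ) = dMP T₁ T₂

/-- The forest induced by an extension `ω`: delete all mutation edges of `ω` from `T`. -/
noncomputable def forest (T : XTree X V) (ω : V → C) : SimpleGraph V :=
  T.g.deleteEdges (mutationEdges T.g ω)

/-- A connected component `c` of the forest `F` carries the state `s`. -/
def carries {V C : Type} (F : SimpleGraph V) (ω : V → C) (c : F.ConnectedComponent) (s : C) : Prop :=
  ∃ v, F.connectedComponentMk v = c ∧ ω v = s

/-- The number of components of `F` carrying the state `s`. A state is *unique*
if this is 1 and *repeating* if this is at least 2. -/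
noncomputable def stateMultiplicity {V C : Type} (F : SimpleGraph V) (ω : V → C) (s : C) : ℕ :=
  {c : F.ConnectedComponent | carries F ω c s}.ncard

/-- Relabel the state `A` as `B` in the character `χ`. -/
def relabel {X C : Type} [DecidableEq C] (χ : X → C) (A B : C) : X → C :=
  fun x => if χ x = A then B else χ x

/-- Two states `A`, `B` are adjacent (with respect to the coloring `ω`) if some edge of the
graph joins a vertex colored `A` to a vertex colored `B`; for distinct states, this edge is a
mutation edge joining the corresponding components of the induced forest. -/
def statesAdjacent {V C : Type} (g : SimpleGraph V) (ω : V → C) (A B : C) : Prop :=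
  ∃ u v, g.Adj u v ∧ ω u = A ∧ ω v = B

end PhyloMP

namespace PhyloAux

open PhyloMP SimpleGraph

lemma cc_exists_rep {V : Type} {G : SimpleGraph V} (c : G.ConnectedComponent) :
    ∃ w, G.connectedComponentMk w = c := c.exists_rep

lemma isAcyclic_of_le {V : Type} {G H : SimpleGraph V} (hle : H ≤ G) (hG : G.IsAcyclic) :
    H.IsAcyclic := fun _ c hc => hG (c.mapLe hle) (hc.mapLe hle)

lemma walk_delete_cases {V : Type} {G : SimpleGraph V} (u v : V) {w x : V} (p : G.Walk w x) :
    (G.deleteEdges {s(u,v)}).Reachable w x ∨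
    ((G.deleteEdges {s(u,v)}).Reachable w u ∧ (G.deleteEdges {s(u,v)}).Reachable x v) ∨
    ((G.deleteEdges {s(u,v)}).Reachable w v ∧ (G.deleteEdges {s(u,v)}).Reachable x u) := by
  induction p with
  | nil => exact Or.inl (Reachable.refl _)
  | @cons w y x h q ih =>
    by_cases he : s(w, y) = s(u, v)
    · rw [Sym2.eq_iff] at he
      rcases he with ⟨rfl, rfl⟩ | ⟨rfl, rfl⟩
      · rcases ih with h1 | ⟨h2a, h2b⟩ | ⟨h3a, h3b⟩
        · exact Or.inr (Or.inl ⟨Reachable.refl _, h1.symm⟩)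
        · exact Or.inl (h2a.symm.trans h2b.symm)
        · exact Or.inl h3b.symm
      · rcases ih with h1 | ⟨h2a, h2b⟩ | ⟨h3a, h3b⟩
        · exact Or.inr (Or.inr ⟨Reachable.refl _, h1.symm⟩)
        · exact Or.inl h2b.symm
        · exact Or.inl (h3a.symm.trans h3b.symm)
    · have hadj : (G.deleteEdges {s(u,v)}).Adj w y := by
        rw [SimpleGraph.deleteEdges_adj]
        exact ⟨h, by simpa using he⟩
      have hr : (G.deleteEdges {s(u,v)}).Reachable w y := hadj.reachable
      rcases ih with h1 | ⟨h2a, h2b⟩ | ⟨h3a, h3b⟩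
      · exact Or.inl (hr.trans h1)
      · exact Or.inr (Or.inl ⟨hr.trans h2a, h2b⟩)
      · exact Or.inr (Or.inr ⟨hr.trans h3a, h3b⟩)

lemma finite_cc {V : Type} [Fintype V] (G : SimpleGraph V) : Finite G.ConnectedComponent :=
  Finite.of_surjective G.connectedComponentMk (fun c => c.exists_rep)

lemma card_cc_delete_edge {V : Type} [Fintype V] {G : SimpleGraph V} (hG : G.IsAcyclic)
    {u v : V} (huv : G.Adj u v) :
    Nat.card (G.deleteEdges {s(u,v)}).ConnectedComponent
      = Nat.card G.ConnectedComponent + 1 := by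
  classical
  set G' := G.deleteEdges {s(u,v)} with hG'def
  have hle : G' ≤ G := SimpleGraph.deleteEdges_le _
  have hnr : ¬ G'.Reachable u v := by
    have hb := (isAcyclic_iff_forall_adj_isBridge.mp hG) huv
    rw [isBridge_iff] at hb
    exact hb
  haveI : Finite G.ConnectedComponent := finite_cc G
  haveI : Finite G'.ConnectedComponent := finite_cc G'
  haveI : Fintype G.ConnectedComponent := Fintype.ofFinite _
  haveI : Fintype G'.ConnectedComponent := Fintype.ofFinite _
  set φ : G'.ConnectedComponent → G.ConnectedComponent :=
    SimpleGraph.ConnectedComponent.map (SimpleGraph.Hom.ofLE hle) with hφdef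
  have hφmk : ∀ w, φ (G'.connectedComponentMk w) = G.connectedComponentMk w := fun w => rfl
  have key1 : ∀ d, φ d = G.connectedComponentMk u →
      d = G'.connectedComponentMk u ∨ d = G'.connectedComponentMk v := by
    intro d hd
    obtain ⟨w, rfl⟩ := cc_exists_rep d
    rw [hφmk] at hd
    obtain ⟨p⟩ := (SimpleGraph.ConnectedComponent.eq).mp hd
    rcases walk_delete_cases u v p with h1 | ⟨h2a, _⟩ | ⟨h3a, _⟩
    · exact Or.inl (ConnectedComponent.sound h1)
    · exact Or.inl (ConnectedComponent.sound h2a)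
    · exact Or.inr (ConnectedComponent.sound h3a)
  have key2 : ∀ d₁ d₂ : G'.ConnectedComponent, φ d₁ = φ d₂ →
      φ d₁ ≠ G.connectedComponentMk u → d₁ = d₂ := by
    intro d₁ d₂ heq hne
    obtain ⟨w₁, rfl⟩ := cc_exists_rep d₁
    obtain ⟨w₂, rfl⟩ := cc_exists_rep d₂
    rw [hφmk] at heq hne
    rw [hφmk] at heq
    obtain ⟨p⟩ := (SimpleGraph.ConnectedComponent.eq).mp heq
    rcases walk_delete_cases u v p with h1 | ⟨h2a, _⟩ | ⟨h3a, _⟩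
    · exact ConnectedComponent.sound h1
    · exact absurd (ConnectedComponent.sound (h2a.mono hle)) hne
    · have h4 : G.connectedComponentMk w₁ = G.connectedComponentMk v :=
        ConnectedComponent.sound (h3a.mono hle)
      have h5 : G.connectedComponentMk v = G.connectedComponentMk u :=
        ConnectedComponent.sound huv.symm.reachable
      exact absurd (h4.trans h5) hne
  have hcard1 : ∀ c : G.ConnectedComponent, c ≠ G.connectedComponentMk u →
      (Finset.univ.filter fun d => φ d = c).card = 1 := by
    intro c hc
    obtain ⟨w, rfl⟩ := cc_exists_rep c
    rw [Finset.card_eq_one]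
    refine ⟨G'.connectedComponentMk w, ?_⟩
    rw [Finset.eq_singleton_iff_unique_mem]
    refine ⟨by simp [hφmk], ?_⟩
    intro d hd
    rw [Finset.mem_filter] at hd
    exact key2 d _ (hd.2.trans (hφmk w).symm) (by rw [hd.2]; exact hc)
  have hcard2 : (Finset.univ.filter fun d => φ d = G.connectedComponentMk u).card = 2 := by
    have hset : (Finset.univ.filter fun d => φ d = G.connectedComponentMk u)
        = {G'.connectedComponentMk u, G'.connectedComponentMk v} := by
      ext d
      simp only [Finset.mem_filter, Finset.mem_univ, true_and, Finset.mem_insert,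
        Finset.mem_singleton]
      constructor
      · exact key1 d
      · rintro (rfl | rfl)
        · exact hφmk u
        · rw [hφmk]
          exact ConnectedComponent.sound huv.symm.reachable
    rw [hset]
    rw [Finset.card_insert_of_notMem, Finset.card_singleton]
    rw [Finset.mem_singleton]
    intro h
    exact hnr ((SimpleGraph.ConnectedComponent.eq).mp h)
  have htot := Finset.card_eq_sum_card_fiberwise
    (f := φ) (s := Finset.univ) (t := Finset.univ) (fun d _ => Finset.mem_univ _)
  rw [Nat.card_eq_fintype_card, Nat.card_eq_fintype_card, ← Finset.card_univ, htot]
  rw [← Finset.sum_erase_add _ _ (Finset.mem_univ (G.connectedComponentMk u))]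
  rw [Finset.sum_congr rfl (fun c hc => hcard1 c (Finset.ne_of_mem_erase hc)),
    Finset.sum_const, smul_eq_mul, mul_one, hcard2]
  rw [Finset.card_erase_of_mem (Finset.mem_univ _), Finset.card_univ]
  have hpos : 0 < Fintype.card G.ConnectedComponent :=
    Fintype.card_pos_iff.mpr ⟨G.connectedComponentMk u⟩
  omega

lemma acyclic_card (n : ℕ) : ∀ {V : Type} [Fintype V] {G : SimpleGraph V}, G.IsAcyclic →
    G.edgeSet.ncard = n → Nat.card G.ConnectedComponent + n = Fintype.card V := by
  induction n with
  | zero =>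
    intro V _ G hG hE
    have hbot : G = ⊥ := by
      rw [← SimpleGraph.edgeSet_eq_empty]
      exact (Set.ncard_eq_zero (G.edgeSet.toFinite)).mp hE
    subst hbot
    have hequiv : (⊥ : SimpleGraph V).ConnectedComponent ≃ V := by
      refine Equiv.ofBijective
        (ConnectedComponent.lift id (fun v w p _ => reachable_bot.mp p.reachable)) ⟨?_, ?_⟩
      · intro d₁ d₂ h
        obtain ⟨w₁, rfl⟩ := cc_exists_rep d₁
        obtain ⟨w₂, rfl⟩ := cc_exists_rep d₂
        simpa using congrArg ((⊥ : SimpleGraph V).connectedComponentMk) h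
      · exact fun w => ⟨(⊥ : SimpleGraph V).connectedComponentMk w, rfl⟩
    rw [Nat.card_congr hequiv, Nat.card_eq_fintype_card, add_zero]
  | succ n ih =>
    intro V _ G hG hE
    have hne : G.edgeSet.Nonempty := by
      rw [← Set.ncard_pos (G.edgeSet.toFinite)]
      omega
    obtain ⟨e, he⟩ := hne
    induction e with
    | h u v =>
      have huv : G.Adj u v := G.mem_edgeSet.mp he
      have hG' : (G.deleteEdges {s(u,v)}).IsAcyclic :=
        isAcyclic_of_le (SimpleGraph.deleteEdges_le _) hG
      have hE' : (G.deleteEdges {s(u,v)}).edgeSet.ncard = n := by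
        rw [SimpleGraph.edgeSet_deleteEdges]
        have h9 := Set.ncard_diff_singleton_of_mem he
        rw [h9, hE]
        omega
      have h10 := ih hG' hE'
      rw [card_cc_delete_edge hG huv] at h10
      omega

lemma mut_sub_edge {V C : Type} (g : SimpleGraph V) (ω : V → C) :
    mutationEdges g ω ⊆ g.edgeSet := fun _ he => he.1

lemma forest_cc_count {X V C : Type} [Fintype V] (T : XTree X V) (ω : V → C) :
    Nat.card (forest T ω).ConnectedComponent = (mutationEdges T.g ω).ncard + 1 := by
  classical
  haveI : Fintype T.g.edgeSet := Fintype.ofFinite _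
  have hEcard : T.g.edgeSet.ncard + 1 = Fintype.card V := by
    have h1 := T.isTree.card_edgeFinset
    rwa [Set.ncard_eq_toFinset_card' ] 
  have hforest : (forest T ω).IsAcyclic :=
    isAcyclic_of_le (SimpleGraph.deleteEdges_le _) T.isTree.2
  have hEf : (forest T ω).edgeSet.ncard
      = T.g.edgeSet.ncard - (mutationEdges T.g ω).ncard := by
    show (T.g.deleteEdges _).edgeSet.ncard = _
    rw [SimpleGraph.edgeSet_deleteEdges]
    exact Set.ncard_diff (mut_sub_edge T.g ω)
      ((T.g.edgeSet.toFinite).subset (mut_sub_edge T.g ω))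
  have hle : (mutationEdges T.g ω).ncard ≤ T.g.edgeSet.ncard :=
    Set.ncard_le_ncard (mut_sub_edge T.g ω) (T.g.edgeSet.toFinite)
  have := acyclic_card ((forest T ω).edgeSet.ncard) hforest rfl
  omega

lemma forest_walk_const {X V C : Type} [Fintype V] (T : XTree X V) (ω : V → C) {a b : V}
    (p : (forest T ω).Walk a b) : ω a = ω b := by
  induction p with
  | nil => rfl
  | @cons a y b h q ih =>
    have hay : ω a = ω y := by
      by_contra hne
      have h' : SimpleGraph.Adj (T.g.deleteEdges (mutationEdges T.g ω)) a y := h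
      rw [SimpleGraph.deleteEdges_adj] at h'
      exact h'.2 ⟨T.g.mem_edgeSet.mpr h'.1, a, y, rfl, hne⟩
    exact hay.trans ih

lemma xtree_nonempty_X {X V : Type} [Fintype V] (T : XTree X V) : Nonempty X := by
  by_contra hX
  haveI : IsEmpty X := not_nonempty_iff.mp hX
  classical
  haveI : DecidableRel T.g.Adj := Classical.decRel _
  have hdeg : ∀ v, T.g.degree v = 3 := by
    intro v
    have h1 : (T.g.neighborSet v).ncard ≠ 1 := by
      intro h
      obtain ⟨x, -⟩ := T.leavesOnly v h
      exact IsEmpty.false x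
    have h2 := T.internalDeg v h1
    rwa [← Nat.card_coe_set_eq, Nat.card_eq_fintype_card,
      SimpleGraph.card_neighborSet_eq_degree] at h2
  have hsum := T.g.sum_degrees_eq_twice_card_edges
  rw [Finset.sum_congr rfl (fun v _ => hdeg v), Finset.sum_const, smul_eq_mul,
    Finset.card_univ] at hsum
  have hcard := T.isTree.card_edgeFinset
  omega

lemma exists_boundary {V : Type} {G : SimpleGraph V} (A : Set V) :
    ∀ {a b : V}, G.Walk a b → a ∈ A → b ∉ A → ∃ x y, G.Adj x y ∧ x ∈ A ∧ y ∉ A := by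
  intro a b p
  induction p with
  | nil => exact fun ha hb => absurd ha hb
  | @cons a y b h q ih =>
    intro ha hb
    by_cases hy : y ∈ A
    · exact ih hy hb
    · exact ⟨a, y, h, ha, hy⟩

lemma mp_state_mem_range {X V C : Type} [Fintype V] (T : XTree X V) (χ : X → C) (ω : V → C)
    (hω : IsMPExtension T χ ω) (v : V) : ω v ∈ Set.range χ := by
  classical
  by_contra hs
  set F := forest T ω with hFdef
  set A : Set V := {w | F.Reachable w v} with hAdef
  have hA : ∀ w ∈ A, ω w = ω v := by
    intro w hw
    obtain ⟨p⟩ := hw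
    exact forest_walk_const T ω p
  have hleaf : ∀ x : X, T.leaf x ∉ A := by
    intro x hx
    exact hs (by rw [← hA _ hx, hω.1 x]; exact ⟨x, rfl⟩)
  obtain ⟨x₀⟩ := xtree_nonempty_X T
  have hvA : v ∈ A := Reachable.refl v
  obtain ⟨p⟩ := T.isTree.1.preconnected v (T.leaf x₀)
  obtain ⟨a, b, hab, haA, hbA⟩ := exists_boundary A p hvA (hleaf x₀)
  have hωa : ω a = ω v := hA a haA
  have hnomut : ∀ w z, T.g.Adj w z → ω w = ω z → s(w,z) ∉ mutationEdges T.g ω := by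
    intro w z hadj heq hmem
    obtain ⟨-, u', v', hvw, hne⟩ := hmem
    rw [Sym2.eq_iff] at hvw
    rcases hvw with ⟨rfl, rfl⟩ | ⟨rfl, rfl⟩
    · exact hne heq
    · exact hne heq.symm
  have hFadj : ∀ w z, T.g.Adj w z → ω w = ω z → F.Adj w z := by
    intro w z hadj heq
    show SimpleGraph.Adj (T.g.deleteEdges _) w z
    rw [SimpleGraph.deleteEdges_adj]
    exact ⟨hadj, hnomut w z hadj heq⟩
  have hωb : ω b ≠ ω v := by
    intro heq
    exact hbA (((hFadj a b hab (hωa.trans heq.symm)).symm.reachable).trans haA)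
  set t := ω b with htdef
  haveI : DecidablePred (· ∈ A) := Classical.decPred _
  set ω' : V → C := fun w => if w ∈ A then t else ω w with hω'def
  have hext : IsExtension T χ ω' := by
    intro x
    have : T.leaf x ∉ A := hleaf x
    simp only [hω'def, if_neg this]
    exact hω.1 x
  have hsub : mutationEdges T.g ω' ⊆ mutationEdges T.g ω := by
    rintro e ⟨heE, u', v', rfl, hne⟩
    by_cases hu : u' ∈ A <;> by_cases hv : v' ∈ A
    · exact absurd (by simp [hω'def, if_pos hu, if_pos hv]) hne
    · refine ⟨heE, u', v', rfl, ?_⟩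
      intro heq
      exact hv (((hFadj u' v' (T.g.mem_edgeSet.mp heE) heq).symm.reachable).trans hu)
    · refine ⟨heE, u', v', rfl, ?_⟩
      intro heq
      exact hu (((hFadj u' v' (T.g.mem_edgeSet.mp heE) heq).reachable).trans hv)
    · refine ⟨heE, u', v', rfl, ?_⟩
      simpa [hω'def, if_neg hu, if_neg hv] using hne
  have he₀ : s(a,b) ∈ mutationEdges T.g ω :=
    ⟨T.g.mem_edgeSet.mpr hab, a, b, rfl, fun h => hωb (h.symm.trans hωa)⟩
  have he₀' : s(a,b) ∉ mutationEdges T.g ω' := by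
    rintro ⟨-, u', v', hvw, hne⟩
    have h1 : ω' a = t := by simp [hω'def, if_pos haA]
    have h2 : ω' b = t := by simp [hω'def, if_neg hbA]; exact htdef.symm
    rw [Sym2.eq_iff] at hvw
    rcases hvw with ⟨rfl, rfl⟩ | ⟨rfl, rfl⟩
    · exact hne (h1.trans h2.symm)
    · exact hne (h2.trans h1.symm)
  have hss : mutationEdges T.g ω' ⊂ mutationEdges T.g ω :=
    (Set.ssubset_iff_of_subset hsub).mpr ⟨s(a,b), he₀, he₀'⟩
  have hlt : (mutationEdges T.g ω').ncard < (mutationEdges T.g ω).ncard :=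
    Set.ncard_lt_ncard hss ((T.g.edgeSet.toFinite).subset (mut_sub_edge T.g ω))
  have hscore : score T χ ≤ (mutationEdges T.g ω').ncard :=
    Nat.sInf_le ⟨ω', hext, rfl⟩
  rw [hω.2] at hlt
  omega

end PhyloAux

open PhyloMP in
/-- With `h = ℓ(T,χ) - |χ| + 1` the homoplasy score, the number of unique
components of the induced forest lies between `|χ| - h` and `|χ|`, and the number of
repeating components lies between `h` and `2h`. -/
theorem stmt_6 {X V C : Type} [Fintype V] (T : XTree X V) (χ : X → C) (ω : V → C)
    (hω : IsMPExtension T χ ω) :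
    nStates χ - (score T χ + 1 - nStates χ)
        ≤ {c : (forest T ω).ConnectedComponent |
            ∃ s, carries (forest T ω) ω c s ∧ stateMultiplicity (forest T ω) ω s = 1}.ncard ∧
    {c : (forest T ω).ConnectedComponent |
        ∃ s, carries (forest T ω) ω c s ∧ stateMultiplicity (forest T ω) ω s = 1}.ncard
      ≤ nStates χ ∧
    score T χ + 1 - nStates χ
        ≤ {c : (forest T ω).ConnectedComponent |
            ∃ s, carries (forest T ω) ω c s ∧ 2 ≤ stateMultiplicity (forest T ω) ω s}.ncard ∧
    {c : (forest T ω).ConnectedComponent |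
        ∃ s, carries (forest T ω) ω c s ∧ 2 ≤ stateMultiplicity (forest T ω) ω s}.ncard
      ≤ 2 * (score T χ + 1 - nStates χ) := by
  classical
  set F := forest T ω with hF
  haveI : Finite F.ConnectedComponent := PhyloAux.finite_cc F
  haveI : Fintype F.ConnectedComponent := Fintype.ofFinite _
  set σ : F.ConnectedComponent → C :=
    SimpleGraph.ConnectedComponent.lift ω
      (fun a b p _ => PhyloAux.forest_walk_const T ω p) with hσ
  have hσmk : ∀ w, σ (F.connectedComponentMk w) = ω w := fun w => rfl
  have hcarries : ∀ (c : F.ConnectedComponent) (s : C), carries F ω c s ↔ σ c = s := by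
    intro c s
    constructor
    · rintro ⟨w, rfl, rfl⟩
      exact hσmk w
    · rintro rfl
      obtain ⟨w, rfl⟩ := PhyloAux.cc_exists_rep c
      exact ⟨w, rfl, (hσmk w).symm⟩
  have hncard : ∀ (P : F.ConnectedComponent → Prop),
      {c | P c}.ncard = (Finset.univ.filter P).card := by
    intro P
    rw [Set.ncard_eq_toFinset_card', Set.toFinset_setOf]
  set m : C → ℕ := fun s => (Finset.univ.filter fun c => σ c = s).card with hm
  have hmult : ∀ s, stateMultiplicity F ω s = m s := by
    intro s
    have hseteq : {c : F.ConnectedComponent | carries F ω c s} = {c | σ c = s} :=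
      Set.ext fun c => hcarries c s
    rw [stateMultiplicity, hseteq, hncard]
  set s₀ : Finset C := Finset.univ.image σ with hs₀
  have hks : s₀.card = nStates χ := by
    have hrange : Set.range σ = Set.range χ := by
      apply Set.Subset.antisymm
      · rintro s ⟨c, rfl⟩
        obtain ⟨w, rfl⟩ := PhyloAux.cc_exists_rep c
        rw [hσmk]
        exact PhyloAux.mp_state_mem_range T χ ω hω w
      · rintro s ⟨x, rfl⟩
        exact ⟨F.connectedComponentMk (T.leaf x), by rw [hσmk]; exact hω.1 x⟩
    rw [nStates, ← hrange, ← Set.ncard_coe_finset]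
    congr 1
    rw [hs₀, Finset.coe_image, Finset.coe_univ, Set.image_univ]
  have hN : Fintype.card F.ConnectedComponent = score T χ + 1 := by
    rw [← Nat.card_eq_fintype_card, hF, PhyloAux.forest_cc_count T ω, hω.2]
  have hm1 : ∀ c : F.ConnectedComponent, 1 ≤ m (σ c) := by
    intro c
    refine Finset.card_pos.mpr ⟨c, ?_⟩
    simp
  have hs₀m : ∀ s ∈ s₀, 1 ≤ m s := by
    intro s hs
    rw [hs₀, Finset.mem_image] at hs
    obtain ⟨c, -, rfl⟩ := hs
    exact hm1 c
  set t₁ := s₀.filter (fun s => m s = 1) with ht₁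
  set t₂ := s₀.filter (fun s => 2 ≤ m s) with ht₂
  have ht12 : t₁.card + t₂.card = s₀.card := by
    rw [ht₁, ht₂]
    have heq2 : s₀.filter (fun s => 2 ≤ m s) = s₀.filter (fun s => ¬ (m s = 1)) := by
      apply Finset.filter_congr
      intro s hs
      have h1 := hs₀m s hs
      exact ⟨fun h2 h1' => by omega, fun hne => by omega⟩
    rw [heq2, Finset.card_filter_add_card_filter_not]
  have hUset : {c : F.ConnectedComponent |
      ∃ s, carries F ω c s ∧ stateMultiplicity F ω s = 1} = {c | m (σ c) = 1} := by
    ext c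
    simp only [Set.mem_setOf_eq]
    constructor
    · rintro ⟨s, hcar, hmu⟩
      have hσs := (hcarries c s).mp hcar
      rw [hmult] at hmu
      rw [hσs]
      exact hmu
    · intro h
      exact ⟨σ c, (hcarries c (σ c)).mpr rfl, by rw [hmult]; exact h⟩
  have hRset : {c : F.ConnectedComponent |
      ∃ s, carries F ω c s ∧ 2 ≤ stateMultiplicity F ω s} = {c | 2 ≤ m (σ c)} := by
    ext c
    simp only [Set.mem_setOf_eq]
    constructor
    · rintro ⟨s, hcar, hmu⟩
      have hσs := (hcarries c s).mp hcar
      rw [hmult] at hmu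
      rw [hσs]
      exact hmu
    · intro h
      exact ⟨σ c, (hcarries c (σ c)).mpr rfl, by rw [hmult]; exact h⟩
  set U := (Finset.univ.filter fun c => m (σ c) = 1).card with hU
  set R := (Finset.univ.filter fun c => 2 ≤ m (σ c)).card with hR
  have hUR : U + R = Fintype.card F.ConnectedComponent := by
    rw [hU, hR, ← Finset.card_univ]
    have heq2 : Finset.univ.filter (fun c => 2 ≤ m (σ c))
        = Finset.univ.filter (fun c => ¬ (m (σ c) = 1)) := by
      apply Finset.filter_congr
      intro c _
      have h1 := hm1 c
      exact ⟨fun h2 h1' => by omega, fun hne => by omega⟩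
    rw [heq2, Finset.card_filter_add_card_filter_not]
  have hfib : ∀ (p : ℕ → Prop) [DecidablePred p], ∀ s ∈ s₀.filter (fun s => p (m s)),
      ((Finset.univ.filter fun c => p (m (σ c))).filter fun c => σ c = s).card = m s := by
    intro p _ s hs
    rw [Finset.mem_filter] at hs
    have heq : ((Finset.univ.filter fun c => p (m (σ c))).filter fun c => σ c = s)
        = Finset.univ.filter fun c => σ c = s := by
      ext c
      simp only [Finset.mem_filter, Finset.mem_univ, true_and]
      exact ⟨fun h => h.2, fun h => ⟨by rw [h]; exact hs.2, h⟩⟩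
    rw [heq]
  have hUt : U = t₁.card := by
    have h1 : U = ∑ s ∈ t₁,
        ((Finset.univ.filter fun c => m (σ c) = 1).filter fun c => σ c = s).card := by
      rw [hU]
      exact Finset.card_eq_sum_card_fiberwise (fun c hc => by
        rw [Finset.mem_coe, Finset.mem_filter] at hc
        rw [Finset.mem_coe, ht₁, Finset.mem_filter]
        exact ⟨Finset.mem_image.mpr ⟨c, Finset.mem_univ c, rfl⟩, hc.2⟩)
    have h2 : ∀ s ∈ t₁,
        ((Finset.univ.filter fun c => m (σ c) = 1).filter fun c => σ c = s).card = 1 := by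
      intro s hs
      rw [hfib (fun n => n = 1) s hs]
      rw [ht₁, Finset.mem_filter] at hs
      exact hs.2
    rw [h1, Finset.sum_congr rfl h2, Finset.sum_const, smul_eq_mul, mul_one]
  have hRt : 2 * t₂.card ≤ R := by
    have h1 : R = ∑ s ∈ t₂,
        ((Finset.univ.filter fun c => 2 ≤ m (σ c)).filter fun c => σ c = s).card := by
      rw [hR]
      exact Finset.card_eq_sum_card_fiberwise (fun c hc => by
        rw [Finset.mem_coe, Finset.mem_filter] at hc
        rw [Finset.mem_coe, ht₂, Finset.mem_filter]
        exact ⟨Finset.mem_image.mpr ⟨c, Finset.mem_univ c, rfl⟩, hc.2⟩)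
    rw [h1]
    calc 2 * t₂.card = ∑ _s ∈ t₂, 2 := by rw [Finset.sum_const, smul_eq_mul, mul_comm]
    _ ≤ ∑ s ∈ t₂,
        ((Finset.univ.filter fun c => 2 ≤ m (σ c)).filter fun c => σ c = s).card :=
      Finset.sum_le_sum (fun s hs => by
        rw [hfib (fun n => 2 ≤ n) s hs]
        rw [ht₂, Finset.mem_filter] at hs
        exact hs.2)
  have hG1 : {c : F.ConnectedComponent |
      ∃ s, carries F ω c s ∧ stateMultiplicity F ω s = 1}.ncard = U := by
    rw [hUset, hncard, hU]
    exact Finset.card_bij (fun c _ => c) (by simp) (by simp) (fun c hc => ⟨c, by simpa using hc, rfl⟩)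
  have hG2 : {c : F.ConnectedComponent |
      ∃ s, carries F ω c s ∧ 2 ≤ stateMultiplicity F ω s}.ncard = R := by
    rw [hRset, hncard, hR]
    exact Finset.card_bij (fun c _ => c) (by simp) (by simp) (fun c hc => ⟨c, by simpa using hc, rfl⟩)
  rw [hG1, hG2]
  have hUR' : U + R = score T χ + 1 := by rw [hUR, hN]
  have hkt : t₁.card + t₂.card = nStates χ := by rw [ht12, hks]
  refine ⟨by omega, by omega, by omega, by omega⟩
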